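/- For n ≥ 1, the number of points x+yi in Oct_n with both x and y even equals 1 + 2(w_n − 2) + (w_n − 2)² − 2(w_n − w_{n−1})(w_n − w_{n−1} + 1). -/

import Mathlib

/-- The sequence `w_{2k} = 3·2^k`, `w_{2k+1} = 4·2^k`. -/
def w (n : ℕ) : ℤ := if n % 2 = 0 then 3 * 2 ^ (n / 2) else 4 * 2 ^ (n / 2)

/-- `E a b` : lattice points with `|x| ≤ a`, `|y| ≤ a`, `|x|+|y| ≤ b`. -/
noncomputable def E (a b : ℤ) : Finset (ℤ × ℤ) :=
  (Finset.Icc (-a) a ×ˢ Finset.Icc (-a) a).filter fun p => |p.1| + |p.2| ≤ b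

noncomputable def Oct (n : ℕ) : Finset (ℤ × ℤ) := E (w n - 2) (w (n + 1) - 3)

noncomputable def S (n : ℕ) : Finset (ℤ × ℤ) := (Oct n).filter fun p => ¬ (2 ∣ p.1 ∧ 2 ∣ p.2)

open Finset

lemma Icc_int_succ_top' {c d : ℤ} (h : c ≤ d + 1) : Icc c (d + 1) = insert (d + 1) (Icc c d) := by
  ext x; simp only [mem_Icc, mem_insert]; omega

lemma sum_affine_aux' (p q c : ℤ) : ∀ n : ℕ,
    2 * ∑ x ∈ Icc c (c + (n : ℤ) - 1), (p + q * x) = n * (2 * p + q * (2 * c + n - 1))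
  | 0 => by
    have : Icc c (c + (0:ℤ) - 1) = ∅ := by apply Icc_eq_empty; omega
    simp [this]
  | (n + 1) => by
    have h1 : c + ((n : ℤ) + 1) - 1 = (c + (n : ℤ) - 1) + 1 := by ring
    have h2 : c ≤ (c + (n : ℤ) - 1) + 1 := by omega
    have h3 : (c + (n : ℤ) - 1) + 1 ∉ Icc c (c + (n : ℤ) - 1) := by simp [mem_Icc]
    push_cast
    rw [h1, Icc_int_succ_top' h2, Finset.sum_insert h3, mul_add, sum_affine_aux' p q c n]
    push_cast
    ring

lemma sum_affine' (p q c d : ℤ) (h : c ≤ d + 1) :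
    2 * ∑ x ∈ Icc c d, (p + q * x) = (d + 1 - c) * (2 * p + q * (c + d)) := by
  obtain ⟨n, hn⟩ : ∃ n : ℕ, (n : ℤ) = d + 1 - c :=
    ⟨(d + 1 - c).toNat, Int.toNat_of_nonneg (by omega)⟩
  have hd : d = c + (n : ℤ) - 1 := by omega
  subst hd
  rw [sum_affine_aux']
  ring

lemma card_filter_prod' (s t : Finset ℤ) (p : ℤ → ℤ → Prop) [∀ x y, Decidable (p x y)] :
    ((s ×ˢ t).filter fun q => p q.1 q.2).card = ∑ x ∈ s, (t.filter (p x)).card := by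
  rw [card_eq_sum_card_fiberwise (f := Prod.fst) (t := s)
    (fun q hq => (mem_filter.mp hq).1 |> fun h => (mem_product.mp h).1)]
  refine Finset.sum_congr rfl fun x hx => ?_
  have : ((s ×ˢ t).filter fun q => p q.1 q.2).filter (fun q => q.1 = x)
      = (t.filter (p x)).image (fun y => (x, y)) := by
    ext ⟨u, v⟩
    simp only [mem_filter, mem_product, mem_image]
    constructor
    · rintro ⟨⟨⟨hu, hv⟩, hp⟩, rfl⟩; exact ⟨v, ⟨hv, hp⟩, rfl⟩
    · rintro ⟨y, ⟨hy, hp⟩, h⟩; cases h; exact ⟨⟨⟨hx, hy⟩, hp⟩, rfl⟩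
  rw [this, card_image_of_injective _ (fun a b h => (Prod.mk.injEq _ _ _ _).mp h |>.2)]

lemma fiber_eq' (a b x : ℤ) :
    (Icc (-a) a).filter (fun y => |x| + |y| ≤ b)
      = Icc (-(min a (b - |x|))) (min a (b - |x|)) := by
  ext y
  simp only [mem_filter, mem_Icc, min_def]
  split_ifs <;> rcases abs_cases y with ⟨hy, _⟩ | ⟨hy, _⟩ <;>
    rcases abs_cases x with ⟨hx, _⟩ | ⟨hx, _⟩ <;> omega

lemma card_E' (a b : ℤ) (ha : 0 ≤ a) (hab : a ≤ b) (hba : b ≤ 2 * a) :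
    ((E a b).card : ℤ) = (2 * a + 1) ^ 2 - 2 * (2 * a - b) * (2 * a - b + 1) := by
  have key : ((E a b).card : ℤ) = ∑ x ∈ Icc (-a) a, (2 * min a (b - |x|) + 1) := by
    rw [E, card_filter_prod' _ _ (fun x y => |x| + |y| ≤ b)]
    push_cast
    refine Finset.sum_congr rfl fun x hx => ?_
    rw [fiber_eq' a b x, Int.card_Icc]
    have hm : 0 ≤ min a (b - |x|) := by
      simp only [mem_Icc] at hx
      rcases abs_cases x with ⟨h, _⟩ | ⟨h, _⟩ <;> simp only [le_min_iff] <;> omega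
    rw [Int.toNat_of_nonneg (by omega)]
    ring
  set t := b - a with ht
  have hde : Icc (-a) a = (Icc (-a) (-(t+1)) ∪ Icc (-t) t) ∪ Icc (t+1) a := by
    ext x; simp only [mem_union, mem_Icc]; omega
  have hd1 : Disjoint (Icc (-a) (-(t+1))) (Icc (-t : ℤ) t) := by
    rw [disjoint_left]; intro x h1 h2; simp only [mem_Icc] at h1 h2; omega
  have hd2 : Disjoint (Icc (-a) (-(t+1)) ∪ Icc (-t) t) (Icc (t+1 : ℤ) a) := by
    rw [disjoint_left]; intro x h1 h2
    simp only [mem_union, mem_Icc] at h1 h2; omega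
  rw [key, hde, sum_union hd2, sum_union hd1]
  have e1 : ∑ x ∈ Icc (-a) (-(t+1)), (2 * min a (b - |x|) + 1)
      = ∑ x ∈ Icc (-a) (-(t+1)), ((2*b+1) + 2 * x) := by
    refine Finset.sum_congr rfl fun x hx => ?_
    simp only [mem_Icc] at hx
    have : |x| = -x := abs_of_nonpos (by omega)
    rw [this, min_eq_right (by omega)]
    ring
  have e2 : ∑ x ∈ Icc (-t) t, (2 * min a (b - |x|) + 1)
      = ∑ x ∈ Icc (-t) t, ((2*a+1) + 0 * x) := by
    refine Finset.sum_congr rfl fun x hx => ?_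
    simp only [mem_Icc] at hx
    have : min a (b - |x|) = a := min_eq_left (by
      rcases abs_cases x with ⟨h, _⟩ | ⟨h, _⟩ <;> omega)
    rw [this]; ring
  have e3 : ∑ x ∈ Icc (t+1) a, (2 * min a (b - |x|) + 1)
      = ∑ x ∈ Icc (t+1) a, ((2*b+1) + (-2) * x) := by
    refine Finset.sum_congr rfl fun x hx => ?_
    simp only [mem_Icc] at hx
    have : |x| = x := abs_of_nonneg (by omega)
    rw [this, min_eq_right (by omega)]
    ring
  rw [e1, e2, e3]
  have s1 := sum_affine' (2*b+1) 2 (-a) (-(t+1)) (by omega)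
  have s2 := sum_affine' (2*a+1) 0 (-t) t (by omega)
  have s3 := sum_affine' (2*b+1) (-2) (t+1) a (by omega)
  nlinarith [s1, s2, s3]

lemma card_even' (a b a' b' : ℤ) (ha : a = 2 * a') (hb : b = 2 * b' ∨ b = 2 * b' + 1) :
    ((E a b).filter fun p => 2 ∣ p.1 ∧ 2 ∣ p.2).card = (E a' b').card := by
  rw [← card_image_of_injective (E a' b')
    (f := fun p : ℤ × ℤ => (2 * p.1, 2 * p.2))
    (fun p q h => by
      simp only [Prod.mk.injEq, Prod.ext_iff] at h ⊢; omega)]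
  congr 1
  ext ⟨x, y⟩
  simp only [E, mem_filter, mem_product, mem_image, mem_Icc, Prod.mk.injEq, Prod.ext_iff]
  constructor
  · rintro ⟨⟨⟨hx1, hx2⟩, hs⟩, ⟨u, hu⟩, ⟨v, hv⟩⟩
    refine ⟨(u, v), ⟨⟨⟨?_, ?_⟩, ?_⟩, ?_, ?_⟩⟩ <;>
      simp only at * <;>
      [skip; skip; skip; omega; omega]
    · rcases abs_cases x with ⟨h, _⟩ | ⟨h, _⟩ <;> omega
    · rcases abs_cases x with ⟨h, _⟩ | ⟨h, _⟩ <;> omega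
    · rcases abs_cases x with ⟨h1, _⟩ | ⟨h1, _⟩ <;> rcases abs_cases y with ⟨h2, _⟩ | ⟨h2, _⟩ <;>
        rcases abs_cases u with ⟨h3, _⟩ | ⟨h3, _⟩ <;> rcases abs_cases v with ⟨h4, _⟩ | ⟨h4, _⟩ <;>
        omega
  · rintro ⟨⟨u, v⟩, ⟨⟨⟨hu1, hu2⟩, hs⟩, hx, hy⟩⟩
    simp only at hx hy
    subst hx hy
    simp only at hs
    refine ⟨⟨⟨?_, ?_⟩, ?_⟩, ⟨u, by ring⟩, ⟨v, by ring⟩⟩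
    · omega
    · omega
    · rcases abs_cases (2*u) with ⟨h1, _⟩ | ⟨h1, _⟩ <;>
        rcases abs_cases (2*v) with ⟨h2, _⟩ | ⟨h2, _⟩ <;>
        rcases abs_cases u with ⟨h3, _⟩ | ⟨h3, _⟩ <;>
        rcases abs_cases v with ⟨h4, _⟩ | ⟨h4, _⟩ <;> omega

theorem stmt_5 (n : ℕ) (hn : 1 ≤ n) :
    (((Oct n).filter fun p : ℤ × ℤ => 2 ∣ p.1 ∧ 2 ∣ p.2).card : ℤ)
      = 1 + 2 * (w n - 2) + (w n - 2) ^ 2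
        - 2 * (w n - w (n - 1)) * (w n - w (n - 1) + 1) := by
  have hp2 : (0:ℤ) < 2 := by norm_num
  rcases Nat.even_or_odd n with ⟨k, hk⟩ | ⟨m, hm⟩
  · -- n = 2k with k ≥ 1; write k = m + 1
    obtain ⟨m, rfl⟩ : ∃ m, k = m + 1 := ⟨k - 1, by omega⟩
    have hP := pow_pos hp2 m
    set P : ℤ := 2 ^ m with hPdef
    have hwn : w n = 6 * P := by
      have h1 : n % 2 = 0 := by omega
      have h2 : n / 2 = m + 1 := by omega
      simp only [w, h1, if_pos, h2, hPdef]
      rw [pow_succ]; ring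
    have hwn1 : w (n + 1) = 8 * P := by
      have h1 : (n + 1) % 2 = 1 := by omega
      have h2 : (n + 1) / 2 = m + 1 := by omega
      simp only [w, h1, h2, hPdef]
      norm_num [pow_succ]; ring
    have hwm1 : w (n - 1) = 4 * P := by
      have h1 : (n - 1) % 2 = 1 := by omega
      have h2 : (n - 1) / 2 = m := by omega
      simp only [w, h1, h2, hPdef]
      norm_num
    rw [Oct, hwn, hwn1, hwm1,
      card_even' _ _ (3 * P - 1) (4 * P - 2) (by ring) (Or.inr (by ring)),
      card_E' _ _ (by omega) (by omega) (by omega)]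
    ring
  · -- n = 2m + 1
    have hP := pow_pos hp2 m
    set P : ℤ := 2 ^ m with hPdef
    have hwn : w n = 4 * P := by
      have h1 : n % 2 = 1 := by omega
      have h2 : n / 2 = m := by omega
      simp only [w, h1, h2, hPdef]
      norm_num
    have hwn1 : w (n + 1) = 6 * P := by
      have h1 : (n + 1) % 2 = 0 := by omega
      have h2 : (n + 1) / 2 = m + 1 := by omega
      simp only [w, h1, h2, hPdef]
      norm_num [pow_succ]; ring
    have hwm1 : w (n - 1) = 3 * P := by
      have h1 : (n - 1) % 2 = 0 := by omega
      have h2 : (n - 1) / 2 = m := by omega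
      simp only [w, h1, h2, hPdef]
      norm_num
    rw [Oct, hwn, hwn1, hwm1,
      card_even' _ _ (2 * P - 1) (3 * P - 2) (by ring) (Or.inr (by ring)),
      card_E' _ _ (by omega) (by omega) (by omega)]
    ring
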